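/- arXiv:1705.01279 — 3 statements merged into one kernel-verified Lean document; each statement's English description precedes it below -/
import Mathlib

section
/- Let n ≥ 1 and let K_1, …, K_n be pairwise disjoint nonempty compact subsets of ℂ. Suppose that for each i, h_i and u_i are holomorphic on ℂ ∖ K_i with h_i(z) → 0 and u_i(z) → 0 as z → ∞, and that Σ_{i=1}^n h_i(z) = Σ_{i=1}^n u_i(z) for every z ∈ ℂ ∖ (K_1 ∪ … ∪ K_n). Then h_i = u_i on ℂ ∖ K_i for every i. -/
open MeasureTheory Filter Set Metric

/-- Uniqueness of the decomposition of a holomorphic function vanishing at infinity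
into summands holomorphic off pairwise disjoint compact sets. -/
theorem stmt1 (n : ℕ) (hn : 1 ≤ n) (K : Fin n → Set ℂ)
    (hKc : ∀ i, IsCompact (K i)) (hKne : ∀ i, (K i).Nonempty)
    (hKdisj : ∀ i j, i ≠ j → Disjoint (K i) (K j))
    (h u : Fin n → ℂ → ℂ)
    (hhol : ∀ i, DifferentiableOn ℂ (h i) (K i)ᶜ)
    (huol : ∀ i, DifferentiableOn ℂ (u i) (K i)ᶜ)
    (hh0 : ∀ i, Filter.Tendsto (h i) (Filter.cocompact ℂ) (nhds 0))
    (hu0 : ∀ i, Filter.Tendsto (u i) (Filter.cocompact ℂ) (nhds 0))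
    (heq : ∀ z ∈ (⋃ i, K i)ᶜ, ∑ i, h i z = ∑ i, u i z) :
    ∀ i, ∀ z ∈ (K i)ᶜ, h i z = u i z := by
  classical
  intro i
  set g : ℂ → ℂ := fun z => ∑ j ∈ Finset.univ.erase i, (u j z - h j z) with hg
  set T : Set ℂ := ⋃ j ∈ Finset.univ.erase i, K j with hT
  have hTc : IsCompact T := (Finset.univ.erase i).isCompact_biUnion fun j _ => hKc j
  -- the key algebraic identity off all the compacts
  have key : ∀ z : ℂ, z ∉ K i → z ∉ T → h i z - u i z = g z := by
    intro z hzi hzT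
    have hz : z ∈ (⋃ j, K j)ᶜ := by
      intro hz
      rcases mem_iUnion.mp hz with ⟨j, hj⟩
      by_cases hji : j = i
      · exact hzi (hji ▸ hj)
      · exact hzT (mem_biUnion (Finset.mem_erase.mpr ⟨hji, Finset.mem_univ j⟩) hj)
    have heqz := heq z hz
    have h1 : ∑ j ∈ Finset.univ.erase i, h j z + h i z = ∑ j, h j z :=
      Finset.sum_erase_add _ _ (Finset.mem_univ i)
    have h2 : ∑ j ∈ Finset.univ.erase i, u j z + u i z = ∑ j, u j z :=
      Finset.sum_erase_add _ _ (Finset.mem_univ i)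
    simp only [hg, Finset.sum_sub_distrib]
    linear_combination h1 - h2 + heqz
  -- glue
  set F : ℂ → ℂ := fun z => if z ∈ K i then g z else h i z - u i z with hF
  have hKiT : ∀ z ∈ K i, z ∉ T := by
    intro z hz hzT
    rcases mem_iUnion₂.mp hzT with ⟨j, hj, hjz⟩
    exact (hKdisj i j (Finset.mem_erase.mp hj).1.symm).le_bot ⟨hz, hjz⟩
  have hFeqg : ∀ z ∈ Tᶜ, F z = g z := by
    intro z hz
    by_cases hzi : z ∈ K i
    · simp [hF, hzi]
    · simp only [hF, if_neg hzi]
      exact key z hzi hz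
  have hFdiff : Differentiable ℂ F := by
    intro z
    by_cases hzi : z ∈ K i
    · have hzT : z ∈ Tᶜ := hKiT z hzi
      have hgd : DifferentiableOn ℂ g Tᶜ := by
        apply DifferentiableOn.fun_sum
        intro j hj
        apply ((huol j).sub (hhol j)).mono
        intro w hw
        simp only [mem_compl_iff]
        intro hwK
        exact hw (mem_biUnion hj hwK)
      have : DifferentiableAt ℂ g z :=
        hgd.differentiableAt (hTc.isClosed.isOpen_compl.mem_nhds hzT)
      apply this.congr_of_eventuallyEq
      filter_upwards [hTc.isClosed.isOpen_compl.mem_nhds hzT] with w hw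
      exact hFeqg w hw
    · have hK : IsOpen (K i)ᶜ := (hKc i).isClosed.isOpen_compl
      have : DifferentiableAt ℂ (fun w => h i w - u i w) z :=
        ((hhol i).sub (huol i)).differentiableAt (hK.mem_nhds hzi)
      apply this.congr_of_eventuallyEq
      filter_upwards [hK.mem_nhds hzi] with w hw
      simp [hF, (mem_compl_iff _ _).mp hw]
  have hF0 : Tendsto F (cocompact ℂ) (nhds 0) := by
    have : F =ᶠ[cocompact ℂ] fun z => h i z - u i z := by
      have : (K i)ᶜ ∈ cocompact ℂ :=
        mem_cocompact.mpr ⟨K i, hKc i, subset_rfl⟩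
      filter_upwards [this] with z hz
      simp [hF, (mem_compl_iff _ _).mp hz]
    apply Tendsto.congr' this.symm
    simpa using (hh0 i).sub (hu0 i)
  have hFzero : ∀ z, F z = 0 := fun z => hFdiff.apply_eq_of_tendsto_cocompact z hF0
  intro z hz
  have h0 := hFzero z
  simp only [hF, if_neg ((mem_compl_iff _ _).mp hz)] at h0
  linear_combination h0
end

section
/- Let f : 𝔻 → ℂ be injective and holomorphic. The function (ζ, z) ↦ (f(ζ) − f(z))/(ζ − z) (with value f′(ζ) when ζ = z) is nonvanishing and holomorphic on 𝔻 × 𝔻, so it admits a holomorphic logarithm L(ζ, z) on 𝔻 × 𝔻; write its Taylor expansion at the origin as L(ζ, z) = Σ_{k,l ≥ 0} ω_{kl} ζ^k z^l. Then for every integer m ≥ 1 and every w ∈ 𝔻 ∖ {0}, the m-th Faber polynomial of f satisfies Φ_m(f(w)) = w^{−m} − m Σ_{l=0}^{∞} ω_{ml} w^l, the series converging for all w ∈ 𝔻. -/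
open MeasureTheory Filter Set Metric

private lemma myCircleIntegral_add {f g : ℂ → ℂ} {c : ℂ} {R : ℝ} (hf : CircleIntegrable f c R)
    (hg : CircleIntegrable g c R) :
    (∮ z in C(c, R), (f z + g z)) = (∮ z in C(c, R), f z) + ∮ z in C(c, R), g z := by
  simp only [circleIntegral, smul_add, intervalIntegral.integral_add hf.out hg.out]

private lemma ofScalars_coeff (a : ℕ → ℂ) (n : ℕ) :
    (FormalMultilinearSeries.ofScalars ℂ a).coeff n = a n := by
  have h : (FormalMultilinearSeries.ofScalars ℂ a).coeff n
      = FormalMultilinearSeries.ofScalars ℂ a n (fun _ => 1) := rfl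
  rw [h, FormalMultilinearSeries.ofScalars_apply_eq]
  simp

/-- Cauchy coefficient formula: if `q` is holomorphic on `ball 0 r` with Taylor coefficients
`a`, then `∮_{C(0,ρ)} u^{-m-1} q(u) du = 2πi a m` for any `0 < ρ < r`. -/
private lemma coeff_integral (q : ℂ → ℂ) (a : ℕ → ℂ) {r ρ : ℝ} (hρ : 0 < ρ) (hρr : ρ < r)
    (hq : DifferentiableOn ℂ q (Metric.ball 0 r))
    (ha : ∀ u ∈ Metric.ball (0 : ℂ) r, HasSum (fun k => a k * u ^ k) (q u)) (m : ℕ) :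
    (∮ u in C(0, ρ), u ^ (-(m : ℤ) - 1) * q u) = (2 * (Real.pi : ℂ) * Complex.I) * a m := by
  have hr : 0 < r := hρ.trans hρr
  have hcoe : ((ρ.toNNReal : ℝ)) = ρ := Real.coe_toNNReal ρ hρ.le
  have hq' : DifferentiableOn ℂ q (Metric.closedBall (0 : ℂ) (ρ.toNNReal : ℝ)) := by
    refine hq.mono fun x hx => ?_
    rw [Metric.mem_closedBall] at hx
    rw [Metric.mem_ball]
    rw [hcoe] at hx
    linarith
  have h1 : HasFPowerSeriesAt q (cauchyPowerSeries q 0 ρ) 0 := by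
    have := (DifferentiableOn.hasFPowerSeriesOnBall (R := ρ.toNNReal) hq'
      (by simpa using hρ)).hasFPowerSeriesAt
    rwa [hcoe] at this
  have h2 : HasFPowerSeriesAt q (FormalMultilinearSeries.ofScalars ℂ a) 0 := by
    rw [hasFPowerSeriesAt_iff]
    filter_upwards [Metric.ball_mem_nhds (0 : ℂ) hr] with z hz
    have hz' := ha z hz
    have e : (fun n => z ^ n • (FormalMultilinearSeries.ofScalars ℂ a).coeff n)
        = fun n => a n * z ^ n := by
      funext n
      rw [ofScalars_coeff, smul_eq_mul, mul_comm]
    rw [e, zero_add]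
    exact hz'
  have heq : FormalMultilinearSeries.ofScalars ℂ a = cauchyPowerSeries q 0 ρ :=
    h2.eq_formalMultilinearSeries h1
  have hcoeff : a m = (cauchyPowerSeries q 0 ρ).coeff m := by
    rw [← heq, ofScalars_coeff]
  have happ : (cauchyPowerSeries q 0 ρ).coeff m
      = (2 * (Real.pi : ℂ) * Complex.I)⁻¹ •
        ∮ z in C(0, ρ), ((1 : ℂ) / (z - 0)) ^ m • (z - 0)⁻¹ • q z := by
    rw [FormalMultilinearSeries.coeff]
    exact cauchyPowerSeries_apply q 0 ρ m 1
  have hint : (∮ z in C(0, ρ), ((1 : ℂ) / (z - 0)) ^ m • (z - 0)⁻¹ • q z)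
      = ∮ u in C(0, ρ), u ^ (-(m : ℤ) - 1) * q u := by
    refine circleIntegral.integral_congr hρ.le fun z hz => ?_
    have hz0 : z ≠ 0 := by
      intro h
      rw [mem_sphere_iff_norm, h] at hz
      simp only [sub_zero, norm_zero] at hz
      linarith
    simp only [sub_zero, smul_eq_mul, one_div]
    rw [zpow_sub₀ hz0, zpow_neg, zpow_natCast, zpow_one, inv_pow]
    ring
  have hTne : (2 * (Real.pi : ℂ) * Complex.I) ≠ 0 := by
    simp [Real.pi_ne_zero, Complex.I_ne_zero, Complex.ofReal_ne_zero]
  rw [hint] at happ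
  rw [hcoeff, happ, smul_eq_mul, ← mul_assoc, mul_inv_cancel₀ hTne, one_mul]

/-- Faber polynomials in terms of Grunsky coefficients: if `L` is a holomorphic
logarithm of `(f(ζ) - f(z))/(ζ - z)` on `𝔻 × 𝔻` with Taylor coefficients
`ω_{kl}` at the origin, then for every `m ≥ 1` and `w ∈ 𝔻 ∖ {0}` the `m`-th
Faber polynomial (defined by a contour integral over any circle of radius
`ρ < |w|`) satisfies `Φ_m(f(w)) = w^{-m} - m ∑_{l≥0} ω_{ml} w^l`. -/
theorem stmt5 (f : ℂ → ℂ) (hf : DifferentiableOn ℂ f (Metric.ball 0 1))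
    (hinj : Set.InjOn f (Metric.ball 0 1))
    (L : ℂ × ℂ → ℂ)
    (hL : DifferentiableOn ℂ L (Metric.ball 0 1 ×ˢ Metric.ball 0 1))
    (hLlog : ∀ ζ ∈ Metric.ball (0 : ℂ) 1, ∀ z ∈ Metric.ball (0 : ℂ) 1,
      ζ ≠ z → Complex.exp (L (ζ, z)) * (ζ - z) = f ζ - f z)
    (hLdiag : ∀ ζ ∈ Metric.ball (0 : ℂ) 1, Complex.exp (L (ζ, ζ)) = deriv f ζ)
    (ω : ℕ → ℕ → ℂ)
    (hω : ∀ ζ ∈ Metric.ball (0 : ℂ) 1, ∀ z ∈ Metric.ball (0 : ℂ) 1,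
      HasSum (fun p : ℕ × ℕ => ω p.1 p.2 * ζ ^ p.1 * z ^ p.2) (L (ζ, z))) :
    ∀ m : ℕ, 1 ≤ m → ∀ w ∈ Metric.ball (0 : ℂ) 1, w ≠ 0 →
      ∀ ρ : ℝ, 0 < ρ → ρ < ‖w‖ →
        ∃ S : ℂ, HasSum (fun l : ℕ => ω m l * w ^ l) S ∧
          -((2 * (Real.pi : ℂ) * Complex.I)⁻¹ *
              ∮ u in C(0, ρ), u ^ (-(m : ℤ)) * deriv f u / (f u - f w)) =
            w ^ (-(m : ℤ)) - (m : ℂ) * S := by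
  intro m hm w hw hw0 ρ hρ hρw
  have hw1 : ‖w‖ < 1 := by
    simpa [Complex.dist_eq] using (Metric.mem_ball.mp hw)
  -- the function g = L(·, w)
  set g : ℂ → ℂ := fun u => L (u, w) with hg_def
  have hg : DifferentiableOn ℂ g (Metric.ball 0 1) := by
    refine hL.comp (differentiableOn_id.prodMk (differentiableOn_const w)) fun u hu => ?_
    exact ⟨hu, hw⟩
  -- the coefficients c k = ∑' l, ω k l * w ^ l
  have hsumw := (hω w hw w hw).summable
  have hck : ∀ k, Summable (fun l => ω k l * w ^ l) := by
    intro k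
    have h1 := hsumw.prod_factor k
    have h2 := h1.mul_right ((w ^ k)⁻¹)
    refine h2.congr fun l => ?_
    rw [mul_right_comm, mul_inv_cancel_right₀ (pow_ne_zero k hw0)]
  set c : ℕ → ℂ := fun k => ∑' l, ω k l * w ^ l with hc_def
  have hc : ∀ k, HasSum (fun l => ω k l * w ^ l) (c k) := fun k => (hck k).hasSum
  have hgsum : ∀ ζ ∈ Metric.ball (0 : ℂ) 1, HasSum (fun k => c k * ζ ^ k) (g ζ) := by
    intro ζ hζ
    have h1 := hω ζ hζ w hw
    refine h1.prod_fiberwise fun k => ?_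
    have h2 := (hc k).mul_left (ζ ^ k)
    have e : (fun l => ζ ^ k * (ω k l * w ^ l)) = fun l => ω k l * ζ ^ k * w ^ l := by
      funext l; ring
    rw [e] at h2
    rwa [mul_comm] at h2
  -- the key functional identity
  have hkey : ∀ ζ ∈ Metric.ball (0 : ℂ) 1, f ζ = f w + Complex.exp (g ζ) * (ζ - w) := by
    intro ζ hζ
    rcases eq_or_ne ζ w with rfl | hne
    · simp
    · have := hLlog ζ hζ w hw hne
      rw [hg_def]
      rw [this]
      ring
  have hgderiv : ∀ u ∈ Metric.ball (0 : ℂ) 1, HasDerivAt g (deriv g u) u := fun u hu =>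
    (hg.differentiableAt (isOpen_ball.mem_nhds hu)).hasDerivAt
  have hfderiv : ∀ u ∈ Metric.ball (0 : ℂ) 1,
      deriv f u = Complex.exp (g u) * (deriv g u * (u - w) + 1) := by
    intro u hu
    have hF : HasDerivAt (fun ζ => f w + Complex.exp (g ζ) * (ζ - w))
        (Complex.exp (g u) * deriv g u * (u - w) + Complex.exp (g u) * 1) u := by
      have h1 := (hgderiv u hu).cexp
      have h2 := h1.mul ((hasDerivAt_id u).sub_const w)
      simpa using h2.const_add (f w)
    have heqn : f =ᶠ[nhds u] fun ζ => f w + Complex.exp (g ζ) * (ζ - w) :=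
      eventually_of_mem (isOpen_ball.mem_nhds hu) hkey
    rw [heqn.deriv_eq, hF.deriv]
    ring
  -- sphere facts
  have hsub : Metric.sphere (0 : ℂ) ρ ⊆ Metric.ball 0 1 := by
    intro u hu
    rw [mem_sphere_iff_norm, sub_zero] at hu
    rw [Metric.mem_ball, Complex.dist_eq, sub_zero]
    rw [hu]
    exact hρw.trans hw1
  have hu0 : ∀ u ∈ Metric.sphere (0 : ℂ) ρ, u ≠ 0 := by
    intro u hu h
    rw [mem_sphere_iff_norm, h, sub_zero, norm_zero] at hu
    linarith
  have hunew : ∀ u ∈ Metric.sphere (0 : ℂ) ρ, u ≠ w := by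
    intro u hu h
    rw [mem_sphere_iff_norm, sub_zero, h] at hu
    linarith
  -- decomposition of the integrand
  have hint_eq : Set.EqOn (fun u => u ^ (-(m : ℤ)) * deriv f u / (f u - f w))
      (fun u => u ^ (-(m : ℤ)) * (u - w)⁻¹ + u ^ (-(m : ℤ)) * deriv g u)
      (Metric.sphere 0 ρ) := by
    intro u hu
    have hub := hsub hu
    have h1 : f u - f w = Complex.exp (g u) * (u - w) := by
      rw [hkey u hub]; ring
    have e1 : Complex.exp (g u) ≠ 0 := Complex.exp_ne_zero _
    have e2 : u - w ≠ 0 := sub_ne_zero.2 (hunew u hu)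
    have hu0' : u ≠ 0 := hu0 u hu
    have hum : u ^ (-(m : ℤ)) = (u ^ m)⁻¹ := by rw [zpow_neg, zpow_natCast]
    simp only [hum]
    rw [hfderiv u hub, h1]
    have e3 : u ^ m ≠ 0 := pow_ne_zero m hu0'
    field_simp
    ring
  -- continuity facts
  have hgc : ContinuousOn g (Metric.ball 0 1) := hg.continuousOn
  have hgc' : ContinuousOn (deriv g) (Metric.ball 0 1) :=
    ((hg.analyticOnNhd isOpen_ball).deriv).continuousOn
  have hzc : ∀ k : ℤ, ContinuousOn (fun u : ℂ => u ^ k) (Metric.sphere 0 ρ) := fun k =>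
    continuousOn_id.zpow₀ k fun u hu => Or.inl (hu0 u hu)
  have hci1 : CircleIntegrable (fun u => u ^ (-(m : ℤ)) * (u - w)⁻¹) 0 ρ := by
    refine ContinuousOn.circleIntegrable hρ.le ?_
    exact (hzc _).mul (((continuousOn_id.sub continuousOn_const).inv₀) fun u hu =>
      sub_ne_zero.2 (hunew u hu))
  have hci2 : CircleIntegrable (fun u => u ^ (-(m : ℤ)) * deriv g u) 0 ρ := by
    refine ContinuousOn.circleIntegrable hρ.le ?_
    exact (hzc _).mul (hgc'.mono hsub)
  have hci3 : CircleIntegrable (fun u => (-(m : ℤ) : ℂ) * u ^ (-(m : ℤ) - 1) * g u) 0 ρ := by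
    refine ContinuousOn.circleIntegrable hρ.le ?_
    exact (continuousOn_const.mul (hzc _)).mul (hgc.mono hsub)
  -- integral A
  have hA : (∮ u in C(0, ρ), u ^ (-(m : ℤ)) * (u - w)⁻¹)
      = -((2 * (Real.pi : ℂ) * Complex.I) * (w ^ m)⁻¹) := by
    obtain ⟨n, rfl⟩ : ∃ n, m = n + 1 := ⟨m - 1, (Nat.succ_pred_eq_of_pos hm).symm⟩
    have hcast : (-(↑(n + 1) : ℤ)) = -(n : ℤ) - 1 := by push_cast; ring
    rw [show (fun u : ℂ => u ^ (-(↑(n + 1) : ℤ)) * (u - w)⁻¹)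
        = fun u : ℂ => u ^ (-(n : ℤ) - 1) * (u - w)⁻¹ by funext u; rw [hcast]]
    have hqd : DifferentiableOn ℂ (fun u : ℂ => (u - w)⁻¹)
        (Metric.ball 0 ‖w‖) := by
      refine DifferentiableOn.inv (differentiableOn_id.sub (differentiableOn_const w))
        fun u hu => sub_ne_zero.2 ?_
      intro h
      rw [Metric.mem_ball, Complex.dist_eq, sub_zero, h] at hu
      exact lt_irrefl _ hu
    have hsum : ∀ u ∈ Metric.ball (0 : ℂ) ‖w‖,
        HasSum (fun k => -((w ^ (k + 1))⁻¹) * u ^ k) ((u - w)⁻¹) := by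
      intro u hu
      rw [mem_ball_zero_iff] at hu
      have hlt : ‖u / w‖ < 1 := by
        rw [norm_div, div_lt_one (norm_pos_iff.mpr hw0)]
        simpa using hu
      have h1 := (hasSum_geometric_of_norm_lt_one hlt).mul_left (-(w⁻¹))
      have e : (fun k => -w⁻¹ * (u / w) ^ k) = fun k => -((w ^ (k + 1))⁻¹) * u ^ k := by
        funext k
        rw [div_pow, div_eq_mul_inv, pow_succ, mul_inv]
        ring
      rw [e] at h1
      have e2 : -w⁻¹ * (1 - u / w)⁻¹ = (u - w)⁻¹ := by
        have hz : u - w ≠ 0 := by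
          intro h
          rw [sub_eq_zero] at h
          rw [h] at hu
          simp at hu
        have hwu : w - u ≠ 0 := fun h => hz (by rw [← neg_sub w u, h, neg_zero])
        field_simp
        ring
      rwa [e2] at h1
    rw [coeff_integral _ _ hρ hρw hqd hsum n]
    ring
  -- integral B
  have hB : (∮ u in C(0, ρ), u ^ (-(m : ℤ)) * deriv g u)
      = (m : ℂ) * ((2 * (Real.pi : ℂ) * Complex.I) * c m) := by
    have hIBP : (∮ u in C(0, ρ),
        ((-(m : ℤ) : ℂ) * u ^ (-(m : ℤ) - 1) * g u + u ^ (-(m : ℤ)) * deriv g u)) = 0 := by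
      refine circleIntegral.integral_eq_zero_of_hasDerivWithinAt
        (f := fun u => u ^ (-(m : ℤ)) * g u) hρ.le fun u hu => ?_
      have h1 := (hasDerivAt_zpow (-(m : ℤ)) u (Or.inl (hu0 u hu))).mul
        (hgderiv u (hsub hu))
      have h2 := h1.hasDerivWithinAt (s := Metric.sphere 0 ρ)
      convert h2 using 1
      · rfl
      push_cast
      ring
    rw [myCircleIntegral_add hci3 hci2] at hIBP
    have hconst : (∮ u in C(0, ρ), (-(m : ℤ) : ℂ) * u ^ (-(m : ℤ) - 1) * g u)
        = (-(m : ℤ) : ℂ) * ∮ u in C(0, ρ), u ^ (-(m : ℤ) - 1) * g u := by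
      rw [← circleIntegral.integral_const_mul]
      simp only [mul_assoc]
    rw [hconst, coeff_integral g c hρ (hρw.trans hw1) hg hgsum m] at hIBP
    push_cast at hIBP ⊢
    linear_combination hIBP
  -- assembly
  refine ⟨c m, hc m, ?_⟩
  have hsplit : (∮ u in C(0, ρ), u ^ (-(m : ℤ)) * deriv f u / (f u - f w))
      = (∮ u in C(0, ρ), u ^ (-(m : ℤ)) * (u - w)⁻¹)
        + ∮ u in C(0, ρ), u ^ (-(m : ℤ)) * deriv g u := by
    rw [circleIntegral.integral_congr hρ.le hint_eq]
    exact myCircleIntegral_add hci1 hci2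
  have hTne : (2 * (Real.pi : ℂ) * Complex.I) ≠ 0 := by
    simp [Real.pi_ne_zero, Complex.I_ne_zero, Complex.ofReal_ne_zero]
  have hwm : w ^ (-(m : ℤ)) = (w ^ m)⁻¹ := by rw [zpow_neg, zpow_natCast]
  rw [hsplit, hA, hB, hwm]
  have hwmne : (w : ℂ) ^ m ≠ 0 := pow_ne_zero m hw0
  field_simp
  ring
end

section
/- Let f : 𝔻 → ℂ be injective and holomorphic with f(𝔻) bounded, let m ≥ 1 be an integer, and let h(z) = z^{−m} (an element of D_∞(𝔻⁻)). Then for every Z ∈ ℂ ∖ closure(f(𝔻)), I_f h(Z) = Φ_m(Z), where Φ_m is the m-th Faber polynomial of f. Equivalently, lim_{r→1⁻} −(1/(2πi)) ∮_{|w|=r} conj(w)^m f′(w)/(f(w)−Z) dw = −(1/(2πi)) ∮_{|w|=s} w^{−m} f′(w)/(f(w)−Z) dw for any s ∈ (0,1) with Z ∉ f({|w| ≤ s}). -/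
open MeasureTheory Filter Set Metric

/-- The Faber operator applied to `z^{-m}` yields the `m`-th Faber polynomial:
the limiting contour integral with the reflection `conj(w)^m` in place of
`h(1/conj w)` converges, as `ρ → 1⁻`, to the contour integral defining the
Faber polynomial over any circle of radius `s` with `Z ∉ f(closedBall 0 s)`. -/
theorem stmt10 (f : ℂ → ℂ) (hf : DifferentiableOn ℂ f (Metric.ball 0 1))
    (hinj : Set.InjOn f (Metric.ball 0 1))
    (hb : Bornology.IsBounded (f '' Metric.ball 0 1))
    (m : ℕ) (hm : 1 ≤ m) (Z : ℂ)
    (hZ : Z ∉ closure (f '' Metric.ball 0 1))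
    (s : ℝ) (hs : s ∈ Set.Ioo (0 : ℝ) 1)
    (hZs : Z ∉ f '' Metric.closedBall 0 s) :
    Filter.Tendsto (fun ρ : ℝ =>
        -((2 * (Real.pi : ℂ) * Complex.I)⁻¹ *
          ∮ w in C(0, ρ), ((starRingEnd ℂ) w) ^ m * deriv f w / (f w - Z)))
      (nhdsWithin 1 (Set.Iio 1))
      (nhds (-((2 * (Real.pi : ℂ) * Complex.I)⁻¹ *
        ∮ w in C(0, s), w ^ (-(m : ℤ)) * deriv f w / (f w - Z)))) := by
  set G : ℂ → ℂ := fun w => w ^ (-(m : ℤ)) * deriv f w / (f w - Z) with hGdef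
  set A : ℂ := ∮ w in C(0, s), G w with hAdef
  set c : ℂ := (2 * (Real.pi : ℂ) * Complex.I)⁻¹ with hcdef
  -- f w ≠ Z on the ball
  have hfne : ∀ w ∈ Metric.ball (0 : ℂ) 1, f w - Z ≠ 0 := by
    intro w hw h
    exact hZ (subset_closure ⟨w, hw, by linear_combination h⟩)
  have hderiv : DifferentiableOn ℂ (deriv f) (Metric.ball (0 : ℂ) 1) :=
    ((hf.analyticOnNhd isOpen_ball).deriv).differentiableOn
  have hGdiff : ∀ w ∈ Metric.ball (0 : ℂ) 1 \ {(0 : ℂ)}, DifferentiableAt ℂ G w := by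
    rintro w ⟨hw, hw0⟩
    have hw0' : w ≠ 0 := by simpa using hw0
    have h1 : DifferentiableAt ℂ f w := hf.differentiableAt (isOpen_ball.mem_nhds hw)
    have h2 : DifferentiableAt ℂ (deriv f) w := hderiv.differentiableAt (isOpen_ball.mem_nhds hw)
    have h3 : DifferentiableAt ℂ (fun w => w ^ (-(m : ℤ))) w :=
      differentiableAt_zpow.2 (Or.inl hw0')
    exact ((h3.mul h2).div (h1.sub_const Z) (hfne w hw))
  -- for s ≤ ρ < 1 the integral of G over C(0,ρ) equals A
  have hGint : ∀ ρ : ℝ, ρ ∈ Set.Ico s 1 → (∮ w in C(0, ρ), G w) = A := by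
    intro ρ hρ
    refine Complex.circleIntegral_eq_of_differentiable_on_annulus_off_countable hs.1 hρ.1
      Set.countable_empty ?_ ?_
    · intro w hw
      have : w ∈ Metric.ball (0 : ℂ) 1 \ {(0 : ℂ)} := by
        constructor
        · exact mem_ball_zero_iff.2 (lt_of_le_of_lt (mem_closedBall_zero_iff.1 hw.1) hρ.2)
        · simp only [Set.mem_singleton_iff]
          intro h
          apply hw.2
          simp only [h, mem_ball_zero_iff, norm_zero]
          exact hs.1
      exact (hGdiff w this).continuousAt.continuousWithinAt
    · rintro w ⟨⟨hw1, hw2⟩, -⟩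
      refine hGdiff w ⟨?_, ?_⟩
      · exact mem_ball_zero_iff.2 (lt_trans (mem_ball_zero_iff.1 hw1) hρ.2)
      · simp only [Set.mem_singleton_iff]
        intro h
        apply hw2
        simp only [h, mem_closedBall_zero_iff, norm_zero]
        exact hs.1.le
  -- eventual equality with ρ^(2m) • A
  have hev : ∀ᶠ ρ : ℝ in nhdsWithin 1 (Set.Iio 1),
      -(c * ∮ w in C(0, ρ), ((starRingEnd ℂ) w) ^ m * deriv f w / (f w - Z))
        = -(c * (((ρ : ℂ)) ^ (2 * m) * A)) := by
    have hmem : ∀ᶠ ρ : ℝ in nhdsWithin 1 (Set.Iio 1), ρ ∈ Set.Ioo s 1 := by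
      filter_upwards [eventually_mem_nhdsWithin,
        eventually_nhdsWithin_of_eventually_nhds (eventually_gt_nhds hs.2)] with ρ h1 h2
      exact ⟨h2, h1⟩
    filter_upwards [hmem] with ρ hρ
    have hρ0 : (0 : ℝ) < ρ := lt_trans hs.1 hρ.1
    have heq : Set.EqOn (fun w => ((starRingEnd ℂ) w) ^ m * deriv f w / (f w - Z))
        (fun w => ((ρ : ℂ)) ^ (2 * m) * G w) (Metric.sphere (0 : ℂ) ρ) := by
      intro w hw
      have hwn : ‖w‖ = ρ := by simpa using hw
      have hw0 : w ≠ 0 := by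
        intro h; rw [h] at hwn; simp at hwn; exact hρ0.ne' hwn.symm
      have hconj : (starRingEnd ℂ) w = (ρ : ℂ) ^ 2 * w⁻¹ := by
        field_simp
        rw [mul_comm]
        have := Complex.mul_conj w
        rw [this]
        rw [Complex.normSq_eq_norm_sq]
        push_cast [← hwn]
        rfl
      simp only [G]
      rw [hconj]
      rw [mul_pow, ← pow_mul, mul_comm 2 m, mul_comm m 2, zpow_neg, zpow_natCast, inv_pow]
      field_simp
    rw [circleIntegral.integral_congr hρ0.le heq, circleIntegral.integral_const_mul,
      hGint ρ ⟨hρ.1.le, hρ.2⟩]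
  refine Filter.Tendsto.congr' (Filter.EventuallyEq.symm hev) ?_
  have h1 : Filter.Tendsto (fun ρ : ℝ => ((ρ : ℂ)) ^ (2 * m)) (nhdsWithin 1 (Set.Iio 1))
      (nhds 1) := by
    have := (Complex.continuous_ofReal.tendsto 1).mono_left (nhdsWithin_le_nhds (s := Set.Iio (1:ℝ)))
    simpa using this.pow (2 * m)
  have h2 := ((h1.mul_const A).const_mul c).neg
  simpa using h2
end
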